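/- Let E be a channel on M_s and suppose there exist a subchannel S from M_d to M_s, a subchannel R from M_s to M_d, and a real p > 0 such that R(E(S(X))) = p·X for all X ∈ M_d. Then there exist a channel S̃ from M_d to M_s and a subchannel R̃ from M_s to M_d such that R̃(E(S̃(X))) = p·X for all X ∈ M_d (with the same p). -/

import Mathlib

open Matrix Kronecker BigOperators
open scoped ComplexOrder

noncomputable section

/-- `Mat n` is the space of `n × n` complex matrices. -/
abbrev Mat (n : ℕ) := Matrix (Fin n) (Fin n) ℂ

/-- A subchannel from `M_n` to `M_m`: a map of Kraus form whose Kraus operators satisfy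
`∑ Kᴴ K ≤ 1` in the Loewner order. -/
def IsSubchannel {n m : Type} [Fintype n] [DecidableEq n] [Fintype m]
    (Φ : Matrix n n ℂ → Matrix m m ℂ) : Prop :=
  ∃ (k : ℕ) (K : Fin k → Matrix m n ℂ),
    (∀ X, Φ X = ∑ i, K i * X * (K i)ᴴ) ∧ (1 - ∑ i, (K i)ᴴ * K i).PosSemidef

/-- A channel from `M_n` to `M_m`: a map of Kraus form with `∑ Kᴴ K = 1`. -/
def IsChannel {n m : Type} [Fintype n] [DecidableEq n] [Fintype m]
    (Φ : Matrix n n ℂ → Matrix m m ℂ) : Prop :=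
  ∃ (k : ℕ) (K : Fin k → Matrix m n ℂ),
    (∀ X, Φ X = ∑ i, K i * X * (K i)ᴴ) ∧ (∑ i, (K i)ᴴ * K i) = 1

/-- `E` is probabilistically correctable for `ℂ^d`. -/
def ProbCorrectable (d : ℕ) {s : ℕ} (E : Mat s → Mat s) : Prop :=
  ∃ (S : Mat d → Mat s) (R : Mat s → Mat d) (p : ℝ),
    IsSubchannel S ∧ IsSubchannel R ∧ 0 < p ∧ ∀ X, R (E (S X)) = (p : ℂ) • X

/-- `E` is perfectly correctable for `ℂ^d`. -/
def PerfCorrectable (d : ℕ) {s : ℕ} (E : Mat s → Mat s) : Prop :=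
  ∃ (S : Mat d → Mat s) (R : Mat s → Mat d),
    IsSubchannel S ∧ IsSubchannel R ∧ ∀ X, R (E (S X)) = X

/-- The Choi matrix of a map on `M_s`. -/
def choi {s : ℕ} (Φ : Mat s → Mat s) : Matrix (Fin s × Fin s) (Fin s × Fin s) ℂ :=
  ∑ i : Fin s, ∑ j : Fin s, (Φ (Matrix.single i j 1)) ⊗ₖ (Matrix.single i j 1)

/-- `rP d s`: the largest `r` such that every channel on `M_s` with Choi rank at most `r`
is probabilistically correctable for `ℂ^d`. -/
def rP (d s : ℕ) : ℕ :=
  sSup {r : ℕ | ∀ E : Mat s → Mat s, IsChannel E → (choi E).rank ≤ r → ProbCorrectable d E}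

/-- `rP1 d s`: the largest `r` such that every channel on `M_s` with Choi rank at most `r`
is perfectly correctable for `ℂ^d`. -/
def rP1 (d s : ℕ) : ℕ :=
  sSup {r : ℕ | ∀ E : Mat s → Mat s, IsChannel E → (choi E).rank ≤ r → PerfCorrectable d E}


section helpers
variable {n m : Type} [Fintype n] [Fintype m]

open scoped MatrixOrder in
/-- Square root of a positive semidefinite matrix. -/
def Matrix.PosSemidef.sqrt [DecidableEq n] {A : Matrix n n ℂ} (_hA : A.PosSemidef) : Matrix n n ℂ := CFC.sqrt A

open scoped MatrixOrder in
lemma Matrix.PosSemidef.posSemidef_sqrt [DecidableEq n] {A : Matrix n n ℂ} (hA : A.PosSemidef) :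
    hA.sqrt.PosSemidef := (CFC.sqrt_nonneg A).posSemidef

open scoped MatrixOrder in
lemma Matrix.PosSemidef.sqrt_mul_self [DecidableEq n] {A : Matrix n n ℂ} (hA : A.PosSemidef) :
    hA.sqrt * hA.sqrt = A := CFC.sqrt_mul_sqrt_self A hA.nonneg

lemma psd_trace_nonneg [DecidableEq n] {A : Matrix n n ℂ} (hA : A.PosSemidef) : 0 ≤ A.trace := by
  refine Finset.sum_nonneg fun i _ => ?_
  have := hA.dotProduct_mulVec_nonneg (Pi.single i 1)
  simpa [dotProduct, Pi.single_apply, Pi.star_apply, apply_ite, ite_mul,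
    Finset.sum_ite_eq', mul_comm] using this

lemma psd_mul_trace_nonneg [DecidableEq n] {A B : Matrix n n ℂ} (hA : A.PosSemidef)
    (hB : B.PosSemidef) : 0 ≤ (A * B).trace := by
  have h2 : (hA.sqrt * B * hA.sqrt).trace = (A * B).trace := by
    rw [Matrix.trace_mul_cycle, Matrix.mul_assoc, ← Matrix.mul_assoc, hA.sqrt_mul_self]
  rw [← h2]
  refine psd_trace_nonneg ?_
  have := hB.mul_mul_conjTranspose_same hA.sqrt
  rwa [hA.posSemidef_sqrt.isHermitian.eq] at this

lemma psd_vecMulVec (v : n → ℂ) : (vecMulVec v (star v)).PosSemidef := by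
  refine Matrix.PosSemidef.of_dotProduct_mulVec_nonneg ?_ ?_
  · ext i j
    simp [Matrix.conjTranspose_apply, Matrix.vecMulVec_apply, mul_comm]
  · intro x
    have h1 : (vecMulVec v (star v)) *ᵥ x = (star v ⬝ᵥ x) • v := by
      funext i
      simp only [Matrix.mulVec, Matrix.vecMulVec_apply, dotProduct, Pi.smul_apply,
        Pi.star_apply, smul_eq_mul, mul_assoc]
      rw [← Finset.mul_sum, mul_comm]
    rw [h1]
    have h2 : star x ⬝ᵥ ((star v ⬝ᵥ x) • v) = (star x ⬝ᵥ v) * star (star x ⬝ᵥ v) := by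
      rw [dotProduct_smul]
      have : star (star x ⬝ᵥ v) = star v ⬝ᵥ x := by
        simp [dotProduct, mul_comm]
      rw [this, smul_eq_mul, mul_comm]
    rw [h2]
    exact mul_star_self_nonneg _

lemma psd_sum {k : ℕ} (f : Fin k → Matrix m n ℂ) :
    (∑ i, (f i)ᴴ * f i).PosSemidef :=
  Finset.sum_induction _ _ (fun _ _ ha hb => ha.add hb) Matrix.PosSemidef.zero
    (fun i _ => Matrix.posSemidef_conjTranspose_mul_self (f i))

lemma kraus_psd {k : ℕ} (F : Fin k → Matrix m n ℂ) {Z : Matrix n n ℂ} (hZ : Z.PosSemidef) :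
    (∑ i, F i * Z * (F i)ᴴ).PosSemidef :=
  Finset.sum_induction _ _ (fun _ _ ha hb => ha.add hb) Matrix.PosSemidef.zero
    (fun i _ => hZ.mul_mul_conjTranspose_same (F i))

lemma trace_mul_vecMulVec (T : Matrix n n ℂ) (v : n → ℂ) :
    (T * vecMulVec v (star v)).trace = star v ⬝ᵥ T *ᵥ v := by
  simp only [Matrix.trace, Matrix.diag_apply, Matrix.mul_apply, Matrix.vecMulVec_apply,
    dotProduct, Matrix.mulVec, Pi.star_apply, Finset.mul_sum]
  exact Finset.sum_congr rfl fun i _ => Finset.sum_congr rfl fun j _ => by ring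

end helpers

/-- Proposition 2 (A): the encoding can be chosen to be a channel, with the same `p`. -/
theorem stmt_3 (d s : ℕ) (E : Mat s → Mat s) (hE : IsChannel E) (p : ℝ) (hp : 0 < p)
    (h : ∃ (S : Mat d → Mat s) (R : Mat s → Mat d),
      IsSubchannel S ∧ IsSubchannel R ∧ ∀ X : Mat d, R (E (S X)) = (p : ℂ) • X) :
    ∃ (St : Mat d → Mat s) (Rt : Mat s → Mat d),
      IsChannel St ∧ IsSubchannel Rt ∧ ∀ X : Mat d, Rt (E (St X)) = (p : ℂ) • X := by
  obtain ⟨S, R, hS, hR, hSR⟩ := h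
  obtain ⟨kS, K, hSK, hSbd⟩ := hS
  obtain ⟨kR, L, hRK, hRbd⟩ := hR
  obtain ⟨kE, M, hEK, hEsum⟩ := hE
  set T : Mat d := ∑ i, (K i)ᴴ * K i with hTdef
  have hTpsd : T.PosSemidef := psd_sum K
  -- E preserves trace
  have hEtr : ∀ Z : Mat s, (E Z).trace = Z.trace := by
    intro Z
    rw [hEK, Matrix.trace_sum]
    calc ∑ i, (M i * Z * (M i)ᴴ).trace
        = ∑ i, ((M i)ᴴ * M i * Z).trace := by
          refine Finset.sum_congr rfl fun i _ => ?_
          rw [Matrix.trace_mul_comm, ← Matrix.mul_assoc]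
      _ = ((∑ i, (M i)ᴴ * M i) * Z).trace := by
          rw [Finset.sum_mul, Matrix.trace_sum]
      _ = Z.trace := by rw [hEsum, Matrix.one_mul]
  -- trace of S X
  have hStr : ∀ X : Mat d, (S X).trace = (T * X).trace := by
    intro X
    rw [hSK, Matrix.trace_sum, hTdef, Finset.sum_mul, Matrix.trace_sum]
    refine Finset.sum_congr rfl fun i _ => ?_
    rw [Matrix.trace_mul_comm, ← Matrix.mul_assoc]
  -- R decreases trace on PSD
  have hRtr : ∀ Y : Mat s, Y.PosSemidef → (R Y).trace ≤ Y.trace := by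
    intro Y hY
    have h1 : (R Y).trace = ((∑ j, (L j)ᴴ * L j) * Y).trace := by
      rw [hRK, Matrix.trace_sum, Finset.sum_mul, Matrix.trace_sum]
      refine Finset.sum_congr rfl fun j _ => ?_
      rw [Matrix.trace_mul_comm, ← Matrix.mul_assoc]
    have h3 : 0 ≤ ((1 - ∑ j, (L j)ᴴ * L j) * Y).trace := psd_mul_trace_nonneg hRbd hY
    rw [Matrix.sub_mul, Matrix.one_mul, Matrix.trace_sub, sub_nonneg] at h3
    rw [h1]; exact h3
  -- T is positive definite
  have hTpd : T.PosDef := by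
    refine Matrix.PosDef.of_dotProduct_mulVec_pos hTpsd.isHermitian fun v hv => ?_
    set X : Mat d := vecMulVec v (star v) with hXdef
    have hXpsd : X.PosSemidef := psd_vecMulVec v
    have e1 : (R (E (S X))).trace = (p : ℂ) * (star v ⬝ᵥ v) := by
      rw [hSR X, Matrix.trace_smul, smul_eq_mul]
      congr 1
      simp [hXdef, Matrix.trace, Matrix.vecMulVec_apply, dotProduct, mul_comm]
    have e2 : (E (S X)).trace = star v ⬝ᵥ T *ᵥ v := by
      rw [hEtr, hStr, hXdef, trace_mul_vecMulVec]
    have hESX : (E (S X)).PosSemidef := by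
      rw [hEK]; exact kraus_psd M (by rw [hSK]; exact kraus_psd K hXpsd)
    have e3 : (R (E (S X))).trace ≤ (E (S X)).trace := hRtr _ hESX
    have e4 : (0 : ℂ) < (p : ℂ) * (star v ⬝ᵥ v) := by
      refine mul_pos ?_ (dotProduct_star_self_pos_iff.mpr hv)
      exact_mod_cast Complex.zero_lt_real.mpr hp
    calc (0 : ℂ) < (p : ℂ) * (star v ⬝ᵥ v) := e4
      _ = (R (E (S X))).trace := e1.symm
      _ ≤ (E (S X)).trace := e3
      _ = star v ⬝ᵥ T *ᵥ v := e2
  -- square root and its inverse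
  set Q : Mat d := hTpsd.sqrt with hQdef
  have hQherm : Q.IsHermitian := hTpsd.posSemidef_sqrt.isHermitian
  have hQQ : Q * Q = T := hTpsd.sqrt_mul_self
  have hQdet : IsUnit Q.det := by
    have hmul : Q.det * Q.det = T.det := by rw [← Matrix.det_mul, hQQ]
    refine isUnit_iff_ne_zero.mpr fun h0 => hTpd.det_pos.ne' ?_
    rw [← hmul, h0, mul_zero]
  set W : Mat d := Q⁻¹ with hWdef
  have hQW : Q * W = 1 := Matrix.mul_nonsing_inv _ hQdet
  have hWQ : W * Q = 1 := Matrix.nonsing_inv_mul _ hQdet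
  have hWherm : W.IsHermitian := hQherm.inv
  have hWTW : W * T * W = 1 := by
    rw [← hQQ, ← Matrix.mul_assoc W Q Q, Matrix.mul_assoc (W * Q) Q W, hQW, hWQ, one_mul]
  refine ⟨fun X => S (W * X * W), fun Y => Q * R Y * Q, ?_, ?_, ?_⟩
  · refine ⟨kS, fun i => K i * W, fun X => ?_, ?_⟩
    · beta_reduce
      rw [hSK]
      refine Finset.sum_congr rfl fun i _ => ?_
      rw [Matrix.conjTranspose_mul, hWherm.eq]
      simp only [Matrix.mul_assoc]
    · calc ∑ i, (K i * W)ᴴ * (K i * W) = ∑ i, W * ((K i)ᴴ * K i) * W := by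
            refine Finset.sum_congr rfl fun i _ => ?_
            rw [Matrix.conjTranspose_mul, hWherm.eq]
            simp only [Matrix.mul_assoc]
        _ = W * (∑ i, (K i)ᴴ * K i) * W := by rw [Finset.mul_sum, Finset.sum_mul]
        _ = 1 := by rw [← hTdef, hWTW]
  · refine ⟨kR, fun j => Q * L j, fun Y => ?_, ?_⟩
    · beta_reduce
      rw [hRK, Finset.mul_sum, Finset.sum_mul]
      refine Finset.sum_congr rfl fun j _ => ?_
      rw [Matrix.conjTranspose_mul, hQherm.eq]
      simp only [Matrix.mul_assoc]
    · have hterm : ∀ j, (Q * L j)ᴴ * (Q * L j) = (L j)ᴴ * T * L j := by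
        intro j
        rw [Matrix.conjTranspose_mul, hQherm.eq, Matrix.mul_assoc,
          ← Matrix.mul_assoc Q Q (L j), hQQ, ← Matrix.mul_assoc]
      have h4 : ∀ j, (L j)ᴴ * (1 - T) * L j = (L j)ᴴ * L j - (L j)ᴴ * T * L j := by
        intro j; rw [Matrix.mul_sub, Matrix.sub_mul, Matrix.mul_one]
      have key : (1 : Mat s) - ∑ j, (L j)ᴴ * T * L j
          = (1 - ∑ j, (L j)ᴴ * L j) + ∑ j, (L j)ᴴ * (1 - T) * L j := by
        simp only [h4, Finset.sum_sub_distrib]; abel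
      simp only [hterm]
      rw [key]
      refine hRbd.add ?_
      exact Finset.sum_induction _ _ (fun _ _ ha hb => ha.add hb) Matrix.PosSemidef.zero
        (fun j _ => hSbd.conjTranspose_mul_mul_same (L j))
  · intro X
    beta_reduce
    rw [hSR (W * X * W), Matrix.mul_smul, Matrix.smul_mul]
    congr 1
    simp only [← Matrix.mul_assoc]
    rw [hQW, Matrix.one_mul, Matrix.mul_assoc, hWQ, Matrix.mul_one]
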